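/- Profile of a tensor: for opponent games O and O', and all n ≥ 1, profile[O ⊗ O']_n = Σ_{i=0}^{n} C(⌊n/2⌋, ⌊i/2⌋) · γ(i, n−i) · profile[O]_i · profile[O']_{n−i}, where γ(i,j) = 1 if i or j is zero or even, and 0 otherwise; also profile[O ⊗ O']_0 = 1. -/

import Mathlib

/-- Rose trees: the unlabeled shape of a game tree. -/
inductive RTree : Type where
  | node : List RTree → RTree

mutual
/-- An opponent game: a finite list of player games (its children). -/
inductive OGame : Type where
  | mk : List PGame → OGame
/-- A player game: a finite list of opponent games (its children). -/
inductive PGame : Type where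
  | mk : List OGame → PGame
end

mutual
/-- The dual of an opponent game. -/
def OGame.dual : OGame → PGame
  | .mk ps => .mk (ps.attach.map fun ⟨p, _⟩ => p.dual)
/-- The dual of a player game. -/
def PGame.dual : PGame → OGame
  | .mk os => .mk (os.attach.map fun ⟨o, _⟩ => o.dual)
end

mutual
/-- Strategy existence in an opponent game: a conjunction over children. -/
def OGame.strat : OGame → Bool
  | .mk ps => ps.attach.all fun ⟨p, _⟩ => p.strat
/-- Strategy existence in a player game: a disjunction over children. -/
def PGame.strat : PGame → Bool
  | .mk os => os.attach.any fun ⟨o, _⟩ => o.strat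
end

mutual
/-- Tensor of opponent games: `O ⊗ O' = (P_i ⊗ˡ O', O ⊗ʳ P'_k | …)`. -/
def otimes : OGame → OGame → OGame
  | .mk ps, .mk qs => .mk ((ps.attach.map fun ⟨p, _⟩ => oxl p (.mk qs)) ++
      (qs.attach.map fun ⟨q, _⟩ => oxr (.mk ps) q))
  termination_by o o' => sizeOf o + sizeOf o'
  decreasing_by
  · have := List.sizeOf_lt_of_mem ‹p ∈ ps›; simp_all; omega
  · have := List.sizeOf_lt_of_mem ‹q ∈ qs›; simp_all; omega
/-- Mixed tensor `O ⊗ʳ P = {O ⊗ O_j | j ∈ J}`. -/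
def oxr : OGame → PGame → PGame
  | o, .mk os => .mk (os.attach.map fun ⟨oj, _⟩ => otimes o oj)
  termination_by o p => sizeOf o + sizeOf p
  decreasing_by
  · have := List.sizeOf_lt_of_mem ‹oj ∈ os›; simp_all; omega
/-- Mixed tensor `P ⊗ˡ O = {O_j ⊗ O | j ∈ J}`. -/
def oxl : PGame → OGame → PGame
  | .mk os, o => .mk (os.attach.map fun ⟨oj, _⟩ => otimes oj o)
  termination_by p o => sizeOf p + sizeOf o
  decreasing_by
  · have := List.sizeOf_lt_of_mem ‹oj ∈ os›; simp_all; omega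
end

mutual
/-- Par of player games: `P ⅋ P' = {O_j ⅋ˡ P', P ⅋ʳ O'_k | …}`. -/
def parr : PGame → PGame → PGame
  | .mk os, .mk qs => .mk ((os.attach.map fun ⟨o, _⟩ => parrOP o (.mk qs)) ++
      (qs.attach.map fun ⟨q, _⟩ => parrPO (.mk os) q))
  termination_by p p' => sizeOf p + sizeOf p'
  decreasing_by
  · have := List.sizeOf_lt_of_mem ‹o ∈ os›; simp_all; omega
  · have := List.sizeOf_lt_of_mem ‹q ∈ qs›; simp_all; omega
/-- Mixed par `P ⅋ʳ O = (P ⅋ P_i | i ∈ I)`. -/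
def parrPO : PGame → OGame → OGame
  | p, .mk ps => .mk (ps.attach.map fun ⟨pi, _⟩ => parr p pi)
  termination_by p o => sizeOf p + sizeOf o
  decreasing_by
  · have := List.sizeOf_lt_of_mem ‹pi ∈ ps›; simp_all; omega
/-- Mixed par `O ⅋ˡ P = (P_i ⅋ P | i ∈ I)`. -/
def parrOP : OGame → PGame → OGame
  | .mk ps, p => .mk (ps.attach.map fun ⟨pi, _⟩ => parr pi p)
  termination_by o p => sizeOf o + sizeOf p
  decreasing_by
  · have := List.sizeOf_lt_of_mem ‹pi ∈ ps›; simp_all; omega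
end

mutual
/-- The exponential `!O`: `!() = ()` and `!O = ⊗_{i∈I} (b_i : !'P_i)` for `I ≠ ∅`. -/
def bang : OGame → OGame
  | .mk [] => .mk []
  | .mk (p :: ps) =>
      (ps.attach.map fun ⟨q, _⟩ => OGame.mk [bang' q]).foldl otimes (OGame.mk [bang' p])
/-- The auxiliary exponential `!'{a_j : O_j} = {a_j : !O_j}`. -/
def bang' : PGame → PGame
  | .mk os => .mk (os.attach.map fun ⟨o, _⟩ => bang o)
end

mutual
/-- Underlying unlabeled tree of an opponent game. -/
def OGame.toTree : OGame → RTree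
  | .mk ps => .node (ps.attach.map fun ⟨p, _⟩ => p.toTree)
/-- Underlying unlabeled tree of a player game. -/
def PGame.toTree : PGame → RTree
  | .mk os => .node (os.attach.map fun ⟨o, _⟩ => o.toTree)
end

/-- Number of nodes (including the root). -/
def RTree.nodes : RTree → ℕ
  | .node cs => 1 + (cs.attach.map fun ⟨c, _⟩ => c.nodes).sum

/-- Number of parent-child edges. -/
def RTree.edges : RTree → ℕ
  | .node cs => cs.length + (cs.attach.map fun ⟨c, _⟩ => c.edges).sum

/-- Number of leaves. -/
def RTree.leaves : RTree → ℕ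
  | .node [] => 1
  | .node cs => (cs.attach.map fun ⟨c, _⟩ => c.leaves).sum

/-- Uniform size: `u[leaf] = 0`, `u[node with n children] = (n-1) + Σ u[child]`. -/
def RTree.usize : RTree → ℕ
  | .node [] => 0
  | .node cs => (cs.length - 1) + (cs.attach.map fun ⟨c, _⟩ => c.usize).sum

/-- Depth: leaves have depth 0. -/
def RTree.depth : RTree → ℕ
  | .node cs => (cs.attach.map fun ⟨c, _⟩ => c.depth + 1).foldr max 0

/-- `profile t k` is the number of nodes of `t` at depth `k`. -/
def RTree.profile : RTree → ℕ → ℕ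
  | _, 0 => 1
  | .node cs, k + 1 => (cs.attach.map fun ⟨c, _⟩ => c.profile k).sum

mutual
/-- Number of player nodes of an opponent game. -/
def OGame.pnodes : OGame → ℕ
  | .mk ps => (ps.attach.map fun ⟨p, _⟩ => p.pnodes).sum
/-- Number of player nodes of a player game (the root counts). -/
def PGame.pnodes : PGame → ℕ
  | .mk os => 1 + (os.attach.map fun ⟨o, _⟩ => o.pnodes).sum
end

mutual
/-- Number of edges leaving opponent nodes, for an opponent game. -/
def OGame.eo : OGame → ℕ
  | .mk ps => ps.length + (ps.attach.map fun ⟨p, _⟩ => p.eo).sum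
/-- Number of edges leaving opponent nodes, for a player game. -/
def PGame.eo : PGame → ℕ
  | .mk os => (os.attach.map fun ⟨o, _⟩ => o.eo).sum
end

mutual
/-- Number of edges leaving player nodes, for an opponent game. -/
def OGame.ep : OGame → ℕ
  | .mk ps => (ps.attach.map fun ⟨p, _⟩ => p.ep).sum
/-- Number of edges leaving player nodes, for a player game. -/
def PGame.ep : PGame → ℕ
  | .mk os => os.length + (os.attach.map fun ⟨o, _⟩ => o.ep).sum
end

/-- `γ(i,j) = 1` if `i` or `j` is zero or even, else `0`. -/
def gammaCoef (i j : ℕ) : ℕ :=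
  if i = 0 ∨ j = 0 ∨ i % 2 = 0 ∨ j % 2 = 0 then 1 else 0

mutual
/-- The single-branch player chain `L_n`. -/
def Lp : ℕ → PGame
  | 0 => .mk []
  | n + 1 => .mk [Lo n]
/-- The single-branch opponent chain `L'_n`. -/
def Lo : ℕ → OGame
  | 0 => .mk []
  | n + 1 => .mk [Lp n]
end

def aCoef (n i : ℕ) : ℕ := Nat.choose (n / 2) (i / 2) * gammaCoef i (n - i)

def bCoef (n k : ℕ) : ℕ :=
  if n = 0 then (if k = 0 then 1 else 0) else if k = 0 then 0 else aCoef (n-1) (k-1)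

lemma gammaCoef_one {i j : ℕ} (h : i = 0 ∨ j = 0 ∨ i % 2 = 0 ∨ j % 2 = 0) :
    gammaCoef i j = 1 := if_pos h

lemma gammaCoef_zero {i j : ℕ} (h : ¬(i = 0 ∨ j = 0 ∨ i % 2 = 0 ∨ j % 2 = 0)) :
    gammaCoef i j = 0 := if_neg h

lemma bCoef_succ (n k : ℕ) : bCoef (n+1) (k+1) = aCoef n k := by simp [bCoef]

lemma bCoef_zero' (n : ℕ) : bCoef (n+1) 0 = 0 := by simp [bCoef]

lemma aCoef_core (m i : ℕ) (h2 : 2 ≤ i) (him : i ≤ m) :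
    aCoef (m+2) i = aCoef m (i-2) + aCoef m (m-i) := by
  obtain ⟨c, rfl | rfl⟩ : ∃ c, i = 2*c+2 ∨ i = 2*c+3 := ⟨(i-2)/2, by omega⟩ <;>
    obtain ⟨a, rfl | rfl⟩ : ∃ a, m = 2*a ∨ m = 2*a+1 := ⟨m/2, by omega⟩
  · -- i even, m even
    simp only [aCoef]
    rw [gammaCoef_one (by omega), gammaCoef_one (by omega), gammaCoef_one (by omega)]
    have e1 : (2*a+2)/2 = a+1 := by omega
    have e2 : (2*c+2)/2 = c+1 := by omega
    have e3 : (2*a)/2 = a := by omega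
    have e4 : (2*c+2-2)/2 = c := by omega
    have e5 : (2*a - (2*c+2))/2 = a - (c+1) := by omega
    rw [e1, e2, e3, e4, e5, Nat.choose_symm (by omega : c+1 ≤ a)]
    simp [Nat.choose_succ_succ]
  · -- i even, m odd
    simp only [aCoef]
    rw [gammaCoef_one (by omega), gammaCoef_one (by omega), gammaCoef_one (by omega)]
    have e1 : (2*a+1+2)/2 = a+1 := by omega
    have e2 : (2*c+2)/2 = c+1 := by omega
    have e3 : (2*a+1)/2 = a := by omega
    have e4 : (2*c+2-2)/2 = c := by omega
    have e5 : (2*a+1 - (2*c+2))/2 = a - (c+1) := by omega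
    rw [e1, e2, e3, e4, e5, Nat.choose_symm (by omega : c+1 ≤ a)]
    simp [Nat.choose_succ_succ]
  · -- i odd, m even : all gammas zero
    rw [aCoef, aCoef, aCoef, gammaCoef_zero (by omega), gammaCoef_zero (by omega),
      gammaCoef_zero (by omega)]
    simp
  · -- i odd, m odd
    simp only [aCoef]
    rw [gammaCoef_one (by omega), gammaCoef_one (by omega), gammaCoef_one (by omega)]
    have e1 : (2*a+1+2)/2 = a+1 := by omega
    have e2 : (2*c+3)/2 = c+1 := by omega
    have e3 : (2*a+1)/2 = a := by omega
    have e4 : (2*c+3-2)/2 = c := by omega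
    have e5 : (2*a+1 - (2*c+3))/2 = a - (c+1) := by omega
    rw [e1, e2, e3, e4, e5, Nat.choose_symm (by omega : c+1 ≤ a)]
    simp [Nat.choose_succ_succ]

lemma key_coef (n i : ℕ) (h : i ≤ n + 1) :
    aCoef (n+1) i =
      (if 1 ≤ i then bCoef n (i-1) else 0) + (if i ≤ n then bCoef n (n-i) else 0) := by
  rcases Nat.eq_zero_or_pos n with rfl | hn
  · interval_cases i <;> simp [aCoef, bCoef, gammaCoef]
  obtain ⟨m, rfl⟩ : ∃ m, n = m + 1 := ⟨n - 1, by omega⟩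
  rcases Nat.eq_zero_or_pos i with rfl | hi
  · -- i = 0
    rw [if_neg (by omega), if_pos (by omega)]
    simp only [bCoef, if_neg (show ¬ (m+1=0) by omega), Nat.sub_zero, Nat.add_sub_cancel,
      if_neg (show ¬ (m+1=0) by omega)]
    rw [aCoef, aCoef, gammaCoef_one (by omega), gammaCoef_one (by omega)]
    simp [Nat.choose_self]
  rcases eq_or_lt_of_le h with rfl | hlt
  · -- i = m + 2
    rw [if_pos (by omega), if_neg (by omega)]
    simp only [Nat.add_sub_cancel, bCoef, if_neg (show ¬ (m+1=0) by omega),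
      if_neg (show ¬ (m+1=0) by omega), Nat.add_sub_cancel]
    rw [aCoef, aCoef, gammaCoef_one (by omega), gammaCoef_one (by omega)]
    simp [Nat.choose_self, Nat.sub_self]
  have hile : i ≤ m + 1 := by omega
  rw [if_pos (show 1 ≤ i by omega), if_pos hile]
  rcases eq_or_lt_of_le (show 1 ≤ i from hi) with hi1 | hi2
  · -- i = 1
    obtain rfl : i = 1 := hi1.symm
    have hb0 : bCoef (m+1) (1-1) = 0 := by norm_num [bCoef]
    have e : m + 1 - 1 = m := by omega
    rw [hb0, zero_add, e]
    obtain ⟨t, rfl | rfl⟩ : ∃ t, m = 2*t ∨ m = 2*t+1 := ⟨m/2, by omega⟩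
    · -- m even
      rcases Nat.eq_zero_or_pos t with rfl | ht
      · norm_num [aCoef, bCoef, gammaCoef]
      obtain ⟨u, rfl⟩ : ∃ u, t = u + 1 := ⟨t-1, by omega⟩
      rw [show (2*(u+1):ℕ) = (2*u+1)+1 by ring, bCoef_succ]
      rw [aCoef, aCoef, gammaCoef_zero (by omega), gammaCoef_zero (by omega)]
      simp
    · -- m odd
      rw [show (2*t+1:ℕ) = (2*t)+1 by ring, bCoef_succ]
      rw [aCoef, aCoef, gammaCoef_one (by omega), gammaCoef_one (by omega)]
      have e3 : (2*t+1+1+1)/2 = t+1 := by omega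
      have e4 : (1:ℕ)/2 = 0 := by norm_num
      have e5 : (2*t+1)/2 = t := by omega
      have e6 : (2*t)/2 = t := by omega
      rw [e3, e4, e5, e6]
      simp [Nat.choose_self]
  rcases eq_or_lt_of_le hile with rfl | him
  · -- i = m+1, i ≥ 2 so m ≥ 1
    obtain ⟨t, rfl⟩ : ∃ t, m = t + 1 := ⟨m-1, by omega⟩
    have ee : t+1+1-1 = t+1 := by omega
    have ee' : t+1+1 - (t+1+1) = 0 := by omega
    rw [ee, ee']
    simp only [bCoef, if_neg (show ¬ (t+1+1=0) by omega), if_neg (show ¬ (t+1=0) by omega),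
      if_pos rfl, Nat.add_sub_cancel, add_zero]
    -- goal: aCoef (t+1+1+1) (t+1+1) = aCoef (t+1) t
    obtain ⟨s, rfl | rfl⟩ : ∃ s, t = 2*s ∨ t = 2*s+1 := ⟨t/2, by omega⟩
    · rw [aCoef, aCoef, gammaCoef_one (by omega), gammaCoef_one (by omega)]
      have e1 : (2*s+1+1+1)/2 = s+1 := by omega
      have e2 : (2*s+1+1)/2 = s+1 := by omega
      have e3 : (2*s+1)/2 = s := by omega
      have e4 : (2*s)/2 = s := by omega
      rw [e1, e2, e3, e4]
      simp [Nat.choose_self]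
    · rw [aCoef, aCoef, gammaCoef_zero (by omega), gammaCoef_zero (by omega)]
      simp
  · -- 2 ≤ i ≤ m
    have h2 : 2 ≤ i := by omega
    have him' : i ≤ m := by omega
    simp only [bCoef, if_neg (show ¬ (m+1=0) by omega),
      if_neg (show ¬ (i-1=0) by omega), if_neg (show ¬ (m+1-i=0) by omega)]
    have e1 : i - 1 - 1 = i - 2 := by omega
    have e2 : m + 1 - 1 = m := by omega
    have e3 : m + 1 - i - 1 = m - i := by omega
    rw [e1, e2, e3]
    rw [show m+1+1 = m+2 from rfl]
    exact aCoef_core m i h2 him'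

lemma OGame.toTree_mk (ps : List PGame) :
    (OGame.mk ps).toTree = .node (ps.map PGame.toTree) := by rw [OGame.toTree]; simp

lemma PGame.toTree_mk (os : List OGame) :
    (PGame.mk os).toTree = .node (os.map OGame.toTree) := by rw [PGame.toTree]; simp

lemma RTree.profile_zero (t : RTree) : t.profile 0 = 1 := by rw [RTree.profile]

lemma RTree.profile_node (cs : List RTree) (n : ℕ) :
    (RTree.node cs).profile (n+1) = (cs.map (RTree.profile · n)).sum := by
  rw [RTree.profile]; simp

lemma otimes_mk (ps qs : List PGame) :
    otimes (.mk ps) (.mk qs) = .mk ((ps.map fun p => oxl p (.mk qs)) ++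
      (qs.map fun q => oxr (.mk ps) q)) := by rw [otimes]; simp

lemma oxl_mk (os : List OGame) (o : OGame) :
    oxl (.mk os) o = .mk (os.map fun oj => otimes oj o) := by rw [oxl]; simp

lemma oxr_mk (o : OGame) (os : List OGame) :
    oxr o (.mk os) = .mk (os.map fun oj => otimes o oj) := by rw [oxr]; simp

lemma list_sum_comm {α : Type*} (l : List α) (m : ℕ) (f : α → ℕ → ℕ) :
    (l.map fun x => ∑ i ∈ Finset.range m, f x i).sum
      = ∑ i ∈ Finset.range m, (l.map fun x => f x i).sum := by
  induction l with
  | nil => simp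
  | cons a l ih => simp [ih, Finset.sum_add_distrib]

-- profile of an OGame at n+1 is the sum over children
lemma oprof_succ (ps : List PGame) (n : ℕ) :
    (OGame.mk ps).toTree.profile (n+1) = (ps.map fun p => p.toTree.profile n).sum := by
  rw [OGame.toTree_mk, RTree.profile_node, List.map_map]; rfl

lemma pprof_succ (os : List OGame) (n : ℕ) :
    (PGame.mk os).toTree.profile (n+1) = (os.map fun o => o.toTree.profile n).sum := by
  rw [PGame.toTree_mk, RTree.profile_node, List.map_map]; rfl

lemma list_sum_mul {α : Type*} (l : List α) (c d : ℕ) (f : α → ℕ) :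
    (l.map fun x => c * f x * d).sum = c * (l.map f).sum * d := by
  induction l with
  | nil => simp
  | cons a l ih => simp [ih, mul_add, add_mul]

lemma list_sum_mul_left {α : Type*} (l : List α) (c : ℕ) (f : α → ℕ) :
    (l.map fun x => c * f x).sum = c * (l.map f).sum := by
  induction l with
  | nil => simp
  | cons a l ih => simp [ih, mul_add]

lemma aCoef_symm (n j : ℕ) (h : j ≤ n) : aCoef n (n - j) = aCoef n j := by
  obtain ⟨c, rfl | rfl⟩ : ∃ c, j = 2*c ∨ j = 2*c+1 := ⟨j/2, by omega⟩ <;>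
    obtain ⟨a, rfl | rfl⟩ : ∃ a, n = 2*a ∨ n = 2*a+1 := ⟨n/2, by omega⟩
  · rw [aCoef, aCoef, gammaCoef_one (by omega), gammaCoef_one (by omega)]
    have e1 : (2*a - 2*c)/2 = a - c := by omega
    have e2 : (2*a)/2 = a := by omega
    have e3 : (2*c)/2 = c := by omega
    rw [e1, e2, e3, Nat.choose_symm (by omega)]
  · rw [aCoef, aCoef, gammaCoef_one (by omega), gammaCoef_one (by omega)]
    have e1 : (2*a+1 - 2*c)/2 = a - c := by omega
    have e2 : (2*a+1)/2 = a := by omega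
    have e3 : (2*c)/2 = c := by omega
    rw [e1, e2, e3, Nat.choose_symm (by omega)]
  · rw [aCoef, aCoef, gammaCoef_zero (by omega), gammaCoef_zero (by omega)]
    simp
  · rw [aCoef, aCoef, gammaCoef_one (by omega), gammaCoef_one (by omega)]
    have e1 : (2*a+1 - (2*c+1))/2 = a - c := by omega
    have e2 : (2*a+1)/2 = a := by omega
    have e3 : (2*c+1)/2 = c := by omega
    rw [e1, e2, e3, Nat.choose_symm (by omega)]

mutual

theorem prof_otimes (O O' : OGame) (n : ℕ) :
    (otimes O O').toTree.profile n =
      ∑ i ∈ Finset.range (n+1),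
        aCoef n i * O.toTree.profile i * O'.toTree.profile (n-i) := by
  obtain ⟨ps⟩ := O; obtain ⟨qs⟩ := O'
  cases n with
  | zero => simp [RTree.profile_zero, aCoef, gammaCoef]
  | succ n =>
    rw [otimes_mk, oprof_succ, List.map_append, List.sum_append, List.map_map, List.map_map]
    have h1 : ((ps.map fun p => (oxl p (OGame.mk qs)).toTree.profile n)).sum
        = ∑ i ∈ Finset.range (n+1),
            bCoef n i * (OGame.mk ps).toTree.profile (i+1)
              * (OGame.mk qs).toTree.profile (n-i) := by
      rw [List.map_congr_left (fun p hp => prof_oxl p (OGame.mk qs) n), list_sum_comm]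
      refine Finset.sum_congr rfl fun i _ => ?_
      rw [list_sum_mul, oprof_succ]
    have h2 : ((qs.map fun q => (oxr (OGame.mk ps) q).toTree.profile n)).sum
        = ∑ i ∈ Finset.range (n+1),
            bCoef n i * (OGame.mk qs).toTree.profile (i+1)
              * (OGame.mk ps).toTree.profile (n-i) := by
      rw [List.map_congr_left (fun q hq => prof_oxr (OGame.mk ps) q n), list_sum_comm]
      refine Finset.sum_congr rfl fun i _ => ?_
      rw [list_sum_mul, oprof_succ]
    simp only [Function.comp_def]
    rw [h1, h2]
    -- now pure coefficient manipulation
    have key : ∀ i ∈ Finset.range (n+2),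
        aCoef (n+1) i * (OGame.mk ps).toTree.profile i
            * (OGame.mk qs).toTree.profile (n+1-i)
          = (if 1 ≤ i then bCoef n (i-1) else 0) * (OGame.mk ps).toTree.profile i
              * (OGame.mk qs).toTree.profile (n+1-i)
            + (if i ≤ n then bCoef n (n-i) else 0) * (OGame.mk ps).toTree.profile i
              * (OGame.mk qs).toTree.profile (n+1-i) := by
      intro i hi
      rw [key_coef n i (by simp at hi; omega), add_mul, add_mul]
    rw [Finset.sum_congr rfl key, Finset.sum_add_distrib]
    congr 1
    · conv_rhs => rw [Finset.sum_range_succ']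
      rw [if_neg (by omega : ¬ (1:ℕ) ≤ 0), zero_mul, zero_mul, add_zero]
      refine Finset.sum_congr rfl fun i hi => ?_
      rw [if_pos (by omega : 1 ≤ i + 1)]
      have e1 : i + 1 - 1 = i := by omega
      have e2 : n + 1 - (i + 1) = n - i := by omega
      rw [e1, e2]
    · conv_rhs => rw [Finset.sum_range_succ]
      rw [if_neg (by omega : ¬ n + 1 ≤ n), zero_mul, zero_mul, add_zero]
      conv_rhs => rw [← Finset.sum_range_reflect]
      refine Finset.sum_congr rfl fun j hj => ?_
      simp only [Finset.mem_range] at hj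
      have e0 : n + 1 - 1 - j = n - j := by omega
      rw [e0, if_pos (by omega : n - j ≤ n)]
      have e2 : n - (n - j) = j := by omega
      have e3 : n + 1 - (n - j) = j + 1 := by omega
      rw [e2, e3]
      ring
  termination_by sizeOf O + sizeOf O'
  decreasing_by
  all_goals
    simp_wf
    first
      | (have h := List.sizeOf_lt_of_mem ‹_ ∈ (_ : List _)›
         omega)
      | omega

theorem prof_oxl (P : PGame) (O' : OGame) (n : ℕ) :
    (oxl P O').toTree.profile n =
      ∑ i ∈ Finset.range (n+1),
        bCoef n i * P.toTree.profile i * O'.toTree.profile (n-i) := by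
  obtain ⟨os⟩ := P
  cases n with
  | zero => simp [RTree.profile_zero, bCoef]
  | succ n =>
    rw [oxl_mk, pprof_succ, List.map_map]
    have h1 : ((os.map fun o => (otimes o O').toTree.profile n)).sum
        = ∑ i ∈ Finset.range (n+1),
            aCoef n i * (PGame.mk os).toTree.profile (i+1) * O'.toTree.profile (n-i) := by
      rw [List.map_congr_left (fun o ho => prof_otimes o O' n), list_sum_comm]
      refine Finset.sum_congr rfl fun i _ => ?_
      rw [list_sum_mul, pprof_succ]
    simp only [Function.comp_def]
    rw [h1]
    conv_rhs => rw [Finset.sum_range_succ']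
    rw [bCoef_zero', zero_mul, zero_mul, add_zero]
    refine Finset.sum_congr rfl fun i hi => ?_
    rw [bCoef_succ]
    have e : n + 1 - (i + 1) = n - i := by omega
    rw [e]
  termination_by sizeOf P + sizeOf O'
  decreasing_by
  all_goals
    simp_wf
    first
      | (have h := List.sizeOf_lt_of_mem ‹_ ∈ (_ : List _)›
         omega)
      | omega

theorem prof_oxr (O : OGame) (P' : PGame) (n : ℕ) :
    (oxr O P').toTree.profile n =
      ∑ i ∈ Finset.range (n+1),
        bCoef n i * P'.toTree.profile i * O.toTree.profile (n-i) := by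
  obtain ⟨os⟩ := P'
  cases n with
  | zero => simp [RTree.profile_zero, bCoef]
  | succ n =>
    rw [oxr_mk, pprof_succ, List.map_map]
    have h1 : ((os.map fun o => (otimes O o).toTree.profile n)).sum
        = ∑ i ∈ Finset.range (n+1),
            aCoef n i * O.toTree.profile i * (PGame.mk os).toTree.profile ((n-i)+1) := by
      rw [List.map_congr_left (fun o ho => prof_otimes O o n), list_sum_comm]
      refine Finset.sum_congr rfl fun i _ => ?_
      rw [list_sum_mul_left os (aCoef n i * O.toTree.profile i)
        (fun o => o.toTree.profile (n-i)), pprof_succ]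
    simp only [Function.comp_def]
    rw [h1]
    conv_lhs => rw [← Finset.sum_range_reflect]
    conv_rhs => rw [Finset.sum_range_succ']
    rw [bCoef_zero', zero_mul, zero_mul, add_zero]
    refine Finset.sum_congr rfl fun j hj => ?_
    simp only [Finset.mem_range] at hj
    have e0 : n + 1 - 1 - j = n - j := by omega
    rw [e0, aCoef_symm n j (by omega)]
    have e2 : n - (n - j) = j := by omega
    rw [e2, bCoef_succ]
    have e3 : n + 1 - (j + 1) = n - j := by omega
    rw [e3]
    ring
  termination_by sizeOf O + sizeOf P'
  decreasing_by
  all_goals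
    simp_wf
    first
      | (have h := List.sizeOf_lt_of_mem ‹_ ∈ (_ : List _)›
         omega)
      | omega

end

/-- profile of the tensor of opponent games. -/
theorem profile_otimes (O O' : OGame) :
    (otimes O O').toTree.profile 0 = 1 ∧
    ∀ n : ℕ, 1 ≤ n →
      (otimes O O').toTree.profile n =
        ∑ i ∈ Finset.range (n + 1),
          Nat.choose (n / 2) (i / 2) * gammaCoef i (n - i) *
            O.toTree.profile i * O'.toTree.profile (n - i) := by
  refine ⟨RTree.profile_zero _, fun n _ => ?_⟩
  rw [prof_otimes O O' n]
  simp only [aCoef]
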